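/- Let f : ℂ → ℂ be holomorphic on the horizontal strip {z : |Im z| < a} for some a > 0 and suppose that for every b < a there is C with |f(x+iy)| ≤ C·e^{−c|x|} for all |y| ≤ b (some fixed c > 0). Then the Fourier transform f̂ restricted to ℝ satisfies: for every k ∈ ℕ and every n < a there exist constants C_n, R > 0 with |f̂^{(k)}(x)| ≤ C_n · k! · R^k · e^{−n|x|} for all x ∈ ℝ. -/

import Mathlib

open Complex MeasureTheory Set Filter Metric

section helpers
-- auxiliary helper lemmas
lemma aux_abs_le_of_mem_uIcc {x y : ℝ} (h : x ∈ Set.uIcc 0 y) : |x| ≤ |y| := by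
  rcases Set.mem_uIcc.mp h with ⟨h1, h2⟩ | ⟨h1, h2⟩
  · rw [_root_.abs_of_nonneg h1]; exact h2.trans (le_abs_self y)
  · rw [_root_.abs_of_nonpos h2]; exact (neg_le_neg h1).trans (neg_le_abs y)
end helpers

lemma aux_integrable_exp_neg_abs {ε : ℝ} (hε : 0 < ε) :
    Integrable (fun t : ℝ => Real.exp (-(ε * |t|))) := by
  have hIoi : IntegrableOn (fun t : ℝ => Real.exp (-(ε * |t|))) (Set.Ioi 0) := by
    refine ((exp_neg_integrableOn_Ioi 0 hε)).congr_fun (fun t ht => ?_) measurableSet_Ioi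
    rw [abs_of_pos ht]; ring_nf
  have hIic : IntegrableOn (fun t : ℝ => Real.exp (-(ε * |t|))) (Set.Iic 0) := by
    rw [← Measure.map_neg_eq_self (volume : Measure ℝ)]
    have m : MeasurableEmbedding fun x : ℝ => -x := (Homeomorph.neg ℝ).measurableEmbedding
    rw [m.integrableOn_map_iff]
    simp_rw [Function.comp_def, abs_neg, neg_preimage, neg_Iic, neg_zero]
    exact (integrableOn_Ici_iff_integrableOn_Ioi).mpr hIoi
  have h := hIic.union hIoi
  rwa [Set.Iic_union_Ioi, integrableOn_univ] at h

lemma aux_abs_mul_exp_le {ε : ℝ} (hε : 0 < ε) (t : ℝ) :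
    |t| * Real.exp (-(ε * |t|)) ≤ (2 / ε) * Real.exp (-(ε / 2 * |t|)) := by
  have h1 : ε / 2 * |t| ≤ Real.exp (ε / 2 * |t|) :=
    le_trans (le_add_of_nonneg_right zero_le_one) (Real.add_one_le_exp _)
  have h2 : |t| ≤ 2 / ε * Real.exp (ε / 2 * |t|) := by
    rw [div_mul_eq_mul_div, le_div_iff₀ hε]
    nlinarith [h1]
  calc |t| * Real.exp (-(ε * |t|))
      ≤ (2 / ε * Real.exp (ε / 2 * |t|)) * Real.exp (-(ε * |t|)) :=
        mul_le_mul_of_nonneg_right h2 (Real.exp_pos _).le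
    _ = (2 / ε) * Real.exp (-(ε / 2 * |t|)) := by
        rw [mul_assoc, ← Real.exp_add]; ring_nf

lemma aux_integrable_abs_mul_exp_neg_abs {ε : ℝ} (hε : 0 < ε) :
    Integrable (fun t : ℝ => |t| * Real.exp (-(ε * |t|))) := by
  refine Integrable.mono' (((aux_integrable_exp_neg_abs (half_pos hε)).const_mul (2 / ε)))
    ?_ (Filter.Eventually.of_forall fun t => ?_)
  · exact (_root_.continuous_abs.mul ((continuous_const.mul _root_.continuous_abs).neg.rexp)).aestronglyMeasurable
  · rw [Real.norm_eq_abs, _root_.abs_of_nonneg (by positivity)]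
    exact aux_abs_mul_exp_le hε t

lemma aux_cauchy_bound {g : ℂ → ℂ} {x : ℂ} {r M : ℝ} (hr : 0 < r)
    (hg : DifferentiableOn ℂ g (Metric.closedBall x r))
    (hM : ∀ z ∈ Metric.closedBall x r, ‖g z‖ ≤ M) (k : ℕ) :
    ‖iteratedDeriv k g x‖ ≤ k.factorial * M * r⁻¹ ^ k := by
  have hM0 : 0 ≤ M := le_trans (norm_nonneg _) (hM x (Metric.mem_closedBall_self hr.le))
  lift r to NNReal using hr.le with r' hr'
  have hr0 : (0 : NNReal) < r' := by exact_mod_cast hr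
  have H := hg.hasFPowerSeriesOnBall hr0
  have hcoef := H.factorial_smul (y := (1 : ℂ)) k
  have h1 : iteratedDeriv k g x = k.factorial • (cauchyPowerSeries g x r' k fun _ => (1:ℂ)) := by
    rw [iteratedDeriv_eq_iteratedFDeriv, ← hcoef]
  have h2 : ‖cauchyPowerSeries g x r' k fun _ => (1:ℂ)‖ ≤ M * (r' : ℝ)⁻¹ ^ k := by
    have h3 := (cauchyPowerSeries g x r' k).le_opNorm fun _ => (1:ℂ)
    simp only [norm_one, Finset.prod_const_one, mul_one] at h3
    refine h3.trans ((norm_cauchyPowerSeries_le g x r' k).trans ?_)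
    have h4 : (∫ θ : ℝ in (0)..2 * Real.pi, ‖g (circleMap x r' θ)‖) ≤ 2 * Real.pi * M := by
      have h5 : ∀ θ ∈ Set.uIoc (0:ℝ) (2 * Real.pi), ‖‖g (circleMap x r' θ)‖‖ ≤ M := by
        intro θ _
        rw [norm_norm]
        exact hM _ (Metric.sphere_subset_closedBall (circleMap_mem_sphere x hr.le θ))
      have h6 := intervalIntegral.norm_integral_le_of_norm_le_const h5
      rw [sub_zero, _root_.abs_of_nonneg (by positivity)] at h6
      calc (∫ θ : ℝ in (0)..2 * Real.pi, ‖g (circleMap x r' θ)‖)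
          ≤ ‖∫ θ : ℝ in (0)..2 * Real.pi, ‖g (circleMap x r' θ)‖‖ := le_abs_self _
        _ ≤ M * (2 * Real.pi) := h6
        _ = 2 * Real.pi * M := by ring
    have habs : |(r' : ℝ)| = (r' : ℝ) := abs_of_nonneg r'.2
    rw [habs]
    have hpow : (0:ℝ) ≤ (r' : ℝ)⁻¹ ^ k := by positivity
    refine mul_le_mul_of_nonneg_right ?_ hpow
    calc (2 * Real.pi)⁻¹ * ∫ θ : ℝ in (0)..2 * Real.pi, ‖g (circleMap x r' θ)‖
        ≤ (2 * Real.pi)⁻¹ * (2 * Real.pi * M) := by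
          refine mul_le_mul_of_nonneg_left h4 (by positivity)
      _ = M := by field_simp
  rw [h1, nsmul_eq_mul, norm_mul, Complex.norm_natCast]
  calc (k.factorial : ℝ) * ‖cauchyPowerSeries g x r' k fun _ => (1:ℂ)‖
      ≤ (k.factorial : ℝ) * (M * (r':ℝ)⁻¹ ^ k) :=
        mul_le_mul_of_nonneg_left h2 (by positivity)
    _ = k.factorial * M * (r':ℝ)⁻¹ ^ k := by ring

theorem stmt4 (f : ℂ → ℂ) (a c : ℝ) (ha : 0 < a) (hc : 0 < c)
    (hf : DifferentiableOn ℂ f {z : ℂ | |z.im| < a})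
    (hbound : ∀ b : ℝ, b < a → ∃ C : ℝ, ∀ x y : ℝ, |y| ≤ b →
      ‖f (x + y * Complex.I)‖ ≤ C * Real.exp (-c * |x|))
    (fhat : ℝ → ℂ)
    (hfhat : ∀ ξ : ℝ, fhat ξ = ∫ t : ℝ, f t * Complex.exp (-Complex.I * t * ξ)) :
    ∀ k : ℕ, ∀ n : ℝ, n < a → ∃ Cn > (0:ℝ), ∃ R > (0:ℝ), ∀ x : ℝ,
      ‖iteratedDeriv k fhat x‖ ≤ Cn * (Nat.factorial k) * R ^ k * Real.exp (-n * |x|) := by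
  have hfc : ContinuousOn f {z : ℂ | |z.im| < a} := hf.continuousOn
  intro k n hn
  set b : ℝ := (max n 0 + a) / 2 with hbdef
  have hmax0 : (0:ℝ) ≤ max n 0 := le_max_right n 0
  have hb0 : 0 < b := by rw [hbdef]; linarith
  have hba : b < a := by
    have h1 : max n 0 < a := max_lt hn ha
    rw [hbdef]; linarith
  have hnb : n ≤ b := by
    have h1 : n ≤ max n 0 := le_max_left n 0
    rw [hbdef]; linarith
  obtain ⟨C₀, hC₀⟩ := hbound b hba
  have hC₀0 : 0 ≤ C₀ := by
    have h := hC₀ 0 0 (by simpa using hb0.le)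
    simp only [abs_zero, neg_mul, mul_zero, neg_zero, Real.exp_zero, mul_one] at h
    exact le_trans (norm_nonneg _) h
  have hc2 : (0:ℝ) < c / 2 := by linarith
  -- pointwise bound on shifted integrand
  have hnorm : ∀ β : ℝ, |β| ≤ b → ∀ ζ : ℂ, |ζ.im| ≤ c / 2 → ∀ t : ℝ,
      ‖f (↑t + ↑β * I) * Complex.exp (-I * (↑t + ↑β * I) * ζ)‖ ≤
        C₀ * Real.exp (β * ζ.re) * Real.exp (-(c / 2 * |t|)) := by
    intro β hβ ζ hζ t
    rw [norm_mul, Complex.norm_exp]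
    have hre : (-I * (↑t + ↑β * I) * ζ).re = β * ζ.re + t * ζ.im := by
      simp [Complex.mul_re, Complex.mul_im]; ring
    rw [hre]
    have h1 : ‖f (↑t + ↑β * I)‖ ≤ C₀ * Real.exp (-c * |t|) := hC₀ t β hβ
    have h3 : Real.exp (-c * |t|) * Real.exp (t * ζ.im) ≤ Real.exp (-(c / 2 * |t|)) := by
      rw [← Real.exp_add, Real.exp_le_exp]
      have h4 : t * ζ.im ≤ |t| * (c / 2) := by
        calc t * ζ.im ≤ |t * ζ.im| := le_abs_self _
          _ = |t| * |ζ.im| := abs_mul _ _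
          _ ≤ |t| * (c / 2) := mul_le_mul_of_nonneg_left hζ (abs_nonneg t)
      linarith
    calc ‖f (↑t + ↑β * I)‖ * Real.exp (β * ζ.re + t * ζ.im)
        ≤ (C₀ * Real.exp (-c * |t|)) * (Real.exp (β * ζ.re) * Real.exp (t * ζ.im)) := by
          rw [Real.exp_add]
          exact mul_le_mul_of_nonneg_right h1 (by positivity)
      _ = (C₀ * Real.exp (β * ζ.re)) * (Real.exp (-c * |t|) * Real.exp (t * ζ.im)) := by ring
      _ ≤ C₀ * Real.exp (β * ζ.re) * Real.exp (-(c / 2 * |t|)) :=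
          mul_le_mul_of_nonneg_left h3 (by positivity)
  -- continuity and measurability of shifted integrands
  have hcontf : ∀ β : ℝ, |β| < a → Continuous fun t : ℝ => f (↑t + ↑β * I) := by
    intro β hβ
    refine hfc.comp_continuous (Complex.continuous_ofReal.add continuous_const) fun t => ?_
    simp only [Set.mem_setOf_eq, Complex.add_im, Complex.ofReal_im, Complex.mul_im,
      Complex.ofReal_re, Complex.I_im, Complex.I_re, mul_zero, mul_one, zero_add, add_zero]
    simpa using hβ
  have hmeas : ∀ β : ℝ, |β| < a → ∀ ζ : ℂ, AEStronglyMeasurable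
      (fun t : ℝ => f (↑t + ↑β * I) * Complex.exp (-I * (↑t + ↑β * I) * ζ)) volume := by
    intro β hβ ζ
    refine ((hcontf β hβ).mul (Complex.continuous_exp.comp (by fun_prop))).aestronglyMeasurable
  -- integrability of shifted integrands
  have hInt : ∀ β : ℝ, |β| ≤ b → ∀ ζ : ℂ, |ζ.im| ≤ c / 2 → Integrable
      (fun t : ℝ => f (↑t + ↑β * I) * Complex.exp (-I * (↑t + ↑β * I) * ζ)) := by
    intro β hβ ζ hζ
    refine Integrable.mono' ((aux_integrable_exp_neg_abs hc2).const_mul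
      (C₀ * Real.exp (β * ζ.re))) (hmeas β (lt_of_le_of_lt hβ hba) ζ)
      (Filter.Eventually.of_forall fun t => ?_)
    simpa [mul_assoc] using hnorm β hβ ζ hζ t
  -- contour shifting
  have hshift : ∀ β : ℝ, |β| ≤ b → ∀ ζ : ℂ, |ζ.im| ≤ c / 2 →
      (∫ t : ℝ, f ↑t * Complex.exp (-I * ↑t * ζ)) =
        ∫ t : ℝ, f (↑t + ↑β * I) * Complex.exp (-I * (↑t + ↑β * I) * ζ) := by
    intro β hβ ζ hζ
    set g : ℂ → ℂ := fun z => f z * Complex.exp (-I * z * ζ) with hgdef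
    have hgd : DifferentiableOn ℂ g {z : ℂ | |z.im| < a} := by
      refine hf.mul (Differentiable.differentiableOn ?_)
      exact ((differentiable_id.const_mul (-I)).mul_const ζ).cexp
    -- rectangle identity
    have key : ∀ T : ℝ,
        ((∫ t in (-T)..T, g ↑t) - ∫ t in (-T)..T, g (↑t + ↑β * I)) =
          I • (∫ y in (0:ℝ)..β, g (-↑T + ↑y * I)) - I • ∫ y in (0:ℝ)..β, g (↑T + ↑y * I) := by
      intro T
      have hsub : (Set.uIcc ((-T:ℝ)) T ×ℂ Set.uIcc (0:ℝ) β) ⊆ {z : ℂ | |z.im| < a} := by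
        intro p hp
        rw [Complex.mem_reProdIm] at hp
        have h1 : |p.im| ≤ |β| := aux_abs_le_of_mem_uIcc hp.2
        have h2 : |β| ≤ b := hβ
        simp only [Set.mem_setOf_eq]
        linarith
      have hrect := Complex.integral_boundary_rect_eq_zero_of_differentiableOn g
        ((-T : ℝ) : ℂ) (((T:ℝ):ℂ) + (β:ℂ) * I) (hgd.mono (by simpa using hsub))
      simp only [Complex.add_re, Complex.ofReal_re, Complex.mul_re, Complex.I_re,
        Complex.ofReal_im, Complex.I_im, mul_zero, mul_one, zero_mul, sub_zero, add_zero,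
        zero_sub, Complex.add_im, Complex.mul_im, zero_add, Complex.ofReal_neg,
        Complex.neg_re, Complex.neg_im, neg_zero, Complex.ofReal_zero,
        zero_mul] at hrect
      linear_combination hrect
    -- side integrals tend to zero
    have hsidebound : ∀ s : ℝ,
        ‖I • ∫ y in (0:ℝ)..β, g (↑s + ↑y * I)‖ ≤
          C₀ * Real.exp (b * |ζ.re|) * Real.exp (-(c / 2 * |s|)) * |β| := by
      intro s
      rw [norm_smul, Complex.norm_I, one_mul]
      have hb1 : ∀ y ∈ Set.uIoc (0:ℝ) β, ‖g (↑s + ↑y * I)‖ ≤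
          C₀ * Real.exp (b * |ζ.re|) * Real.exp (-(c / 2 * |s|)) := by
        intro y hy
        have hyb : |y| ≤ b := le_trans (aux_abs_le_of_mem_uIcc (Set.uIoc_subset_uIcc hy)) hβ
        have h1 := hnorm y hyb ζ hζ s
        have h2 : Real.exp (y * ζ.re) ≤ Real.exp (b * |ζ.re|) := by
          rw [Real.exp_le_exp]
          calc y * ζ.re ≤ |y * ζ.re| := le_abs_self _
            _ = |y| * |ζ.re| := abs_mul _ _
            _ ≤ b * |ζ.re| := mul_le_mul_of_nonneg_right hyb (abs_nonneg _)
        refine h1.trans ?_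
        have := mul_le_mul_of_nonneg_left h2 hC₀0
        exact mul_le_mul_of_nonneg_right (by linarith) (Real.exp_pos _).le
      have h6 := intervalIntegral.norm_integral_le_of_norm_le_const hb1
      rw [sub_zero] at h6
      exact h6
    have hexp0 : Tendsto (fun T : ℝ => C₀ * Real.exp (b * |ζ.re|) *
        Real.exp (-(c / 2 * T)) * |β|) atTop (nhds 0) := by
      have h1 : Tendsto (fun T : ℝ => Real.exp (-(c / 2 * T))) atTop (nhds 0) := by
        have h2 : Tendsto (fun T : ℝ => c / 2 * T) atTop atTop :=
          Tendsto.const_mul_atTop hc2 tendsto_id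
        exact Real.tendsto_exp_neg_atTop_nhds_zero.comp h2
      have h4 := (h1.const_mul (C₀ * Real.exp (b * |ζ.re|))).mul_const |β|
      simpa [mul_comm, mul_assoc, mul_left_comm] using h4
    have hsideR : Tendsto (fun T : ℝ => I • ∫ y in (0:ℝ)..β, g (↑T + ↑y * I)) atTop (nhds 0) := by
      refine squeeze_zero_norm' ?_ hexp0
      filter_upwards [eventually_ge_atTop (0:ℝ)] with T hT
      have := hsidebound T
      rwa [_root_.abs_of_nonneg hT] at this
    have hsideL : Tendsto (fun T : ℝ => I • ∫ y in (0:ℝ)..β, g (-↑T + ↑y * I)) atTop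
        (nhds 0) := by
      refine squeeze_zero_norm' ?_ hexp0
      filter_upwards [eventually_ge_atTop (0:ℝ)] with T hT
      have h8 := hsidebound (-T)
      rw [abs_neg, _root_.abs_of_nonneg hT] at h8
      simpa [Complex.ofReal_neg] using h8
    have hA : Tendsto (fun T : ℝ => ∫ t in (-T)..T, g ↑t) atTop
        (nhds (∫ t : ℝ, g ↑t)) := by
      refine intervalIntegral_tendsto_integral ?_ tendsto_neg_atTop_atBot tendsto_id
      have h := hInt 0 (by simpa using hb0.le) ζ hζ
      simpa [hgdef] using h
    have hB : Tendsto (fun T : ℝ => ∫ t in (-T)..T, g (↑t + ↑β * I)) atTop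
        (nhds (∫ t : ℝ, g (↑t + ↑β * I))) := by
      refine intervalIntegral_tendsto_integral ?_ tendsto_neg_atTop_atBot tendsto_id
      exact hInt β hβ ζ hζ
    have hdiff := hA.sub hB
    have hzero : Tendsto (fun T : ℝ => (∫ t in (-T)..T, g ↑t) - ∫ t in (-T)..T, g (↑t + ↑β * I))
        atTop (nhds 0) := by
      have h7 := hsideL.sub hsideR
      rw [sub_zero] at h7
      refine Tendsto.congr (fun T => (key T).symm) h7
    have := tendsto_nhds_unique hdiff hzero
    rw [sub_eq_zero] at this
    exact this
  -- F and its differentiability on the substrip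
  set F : ℂ → ℂ := fun ζ => ∫ t : ℝ, f ↑t * Complex.exp (-I * ↑t * ζ) with hFdef
  have hInt0 : ∀ ζ : ℂ, |ζ.im| ≤ c / 2 →
      Integrable (fun t : ℝ => f ↑t * Complex.exp (-I * ↑t * ζ)) := by
    intro ζ hζ
    have h := hInt 0 (by simpa using hb0.le) ζ hζ
    simpa using h
  have hFdiff : ∀ ζ₀ : ℂ, |ζ₀.im| < c / 2 → DifferentiableAt ℂ F ζ₀ := by
    intro ζ₀ hζ₀
    set ε : ℝ := (c / 2 - |ζ₀.im|) / 2 with hεdef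
    have hε : 0 < ε := by rw [hεdef]; linarith
    set c' : ℝ := |ζ₀.im| + ε with hc'def
    have hc'lt : c' < c / 2 := by rw [hc'def, hεdef]; linarith
    have hcc' : 0 < c - c' := by
      have : 0 ≤ |ζ₀.im| := abs_nonneg _
      rw [hc'def, hεdef]; linarith
    have key := hasDerivAt_integral_of_dominated_loc_of_deriv_le (μ := volume)
      (F := fun (ζ : ℂ) (t : ℝ) => f ↑t * Complex.exp (-I * ↑t * ζ))
      (F' := fun (ζ : ℂ) (t : ℝ) => f ↑t * (Complex.exp (-I * ↑t * ζ) * (-I * ↑t)))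
      (x₀ := ζ₀) (bound := fun t : ℝ => C₀ * (|t| * Real.exp (-((c - c') * |t|)))) (Metric.ball_mem_nhds ζ₀ hε)
      ?_ ?_ ?_ ?_ ?_ ?_
    · exact key.2.differentiableAt
    · refine Filter.Eventually.of_forall fun ζ => ?_
      have h := hmeas 0 (by simpa using ha) ζ
      simpa using h
    · exact hInt0 ζ₀ hζ₀.le
    · have hco : Continuous fun t : ℝ => f ↑t := by
        have h := hcontf 0 (by simpa using ha)
        simpa using h
      exact (hco.mul ((Complex.continuous_exp.comp (by fun_prop)).mul (by fun_prop))
        ).aestronglyMeasurable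
    · refine Filter.Eventually.of_forall fun t => fun ζ hζb => ?_
      have hζim : |ζ.im| ≤ c' := by
        have h1 : |ζ.im - ζ₀.im| ≤ ‖ζ - ζ₀‖ := by
          have := Complex.abs_im_le_norm (ζ - ζ₀)
          simpa [Complex.sub_im] using this
        have h2 : ‖ζ - ζ₀‖ ≤ ε := by
          rw [← dist_eq_norm]
          exact (Metric.mem_ball.mp hζb).le
        calc |ζ.im| = |ζ.im - ζ₀.im + ζ₀.im| := by ring_nf
          _ ≤ |ζ.im - ζ₀.im| + |ζ₀.im| := abs_add_le _ _
          _ ≤ ε + |ζ₀.im| := by linarith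
          _ = c' := by rw [hc'def]; ring
      rw [norm_mul, norm_mul, Complex.norm_exp]
      have hre : (-I * ↑t * ζ).re = t * ζ.im := by
        simp [Complex.mul_re, Complex.mul_im]
      have habsIt : ‖-I * ↑t‖ = |t| := by
        simp [map_mul]
      rw [hre, habsIt]
      have h1 : ‖f ↑t‖ ≤ C₀ * Real.exp (-c * |t|) := by
        have h := hC₀ t 0 (by simpa using hb0.le)
        simpa using h
      have h3 : Real.exp (t * ζ.im) ≤ Real.exp (c' * |t|) := by
        rw [Real.exp_le_exp]
        calc t * ζ.im ≤ |t * ζ.im| := le_abs_self _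
          _ = |t| * |ζ.im| := abs_mul _ _
          _ ≤ |t| * c' := mul_le_mul_of_nonneg_left hζim (abs_nonneg t)
          _ = c' * |t| := mul_comm _ _
      calc ‖f ↑t‖ * (Real.exp (t * ζ.im) * |t|)
          ≤ (C₀ * Real.exp (-c * |t|)) * (Real.exp (c' * |t|) * |t|) := by
            refine mul_le_mul h1 ?_ (by positivity) (by positivity)
            exact mul_le_mul_of_nonneg_right h3 (abs_nonneg t)
        _ = C₀ * (|t| * (Real.exp (-c * |t|) * Real.exp (c' * |t|))) := by ring
        _ = C₀ * (|t| * Real.exp (-((c - c') * |t|))) := by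
            rw [← Real.exp_add]; ring_nf
    · exact (aux_integrable_abs_mul_exp_neg_abs hcc').const_mul C₀
    · refine Filter.Eventually.of_forall fun t => fun ζ hζb => ?_
      have h := (((hasDerivAt_id ζ).const_mul (-I * (↑t : ℂ))).cexp).const_mul (f ↑t)
      simpa [mul_one, mul_assoc] using h
  have hSopen : IsOpen {ζ : ℂ | |ζ.im| < c / 2} :=
    isOpen_lt (_root_.continuous_abs.comp Complex.continuous_im) continuous_const
  have hFdo : DifferentiableOn ℂ F {ζ : ℂ | |ζ.im| < c / 2} :=
    fun ζ hζ => (hFdiff ζ hζ).differentiableWithinAt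
  have hFan : AnalyticOnNhd ℂ F {ζ : ℂ | |ζ.im| < c / 2} := hFdo.analyticOnNhd hSopen
  -- transfer of iterated derivatives
  have hiter : ∀ (j : ℕ) (x : ℝ), iteratedDeriv j fhat x = iteratedDeriv j F ↑x := by
    intro j
    induction j with
    | zero => intro x; simpa [iteratedDeriv_zero, hFdef] using hfhat x
    | succ j ih =>
      intro x
      rw [iteratedDeriv_succ, iteratedDeriv_succ]
      have hx : (↑x : ℂ) ∈ {ζ : ℂ | |ζ.im| < c / 2} := by
        simp only [Set.mem_setOf_eq, Complex.ofReal_im, abs_zero]; linarith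
      have hA : AnalyticOnNhd ℂ (iteratedDeriv j F) {ζ : ℂ | |ζ.im| < c / 2} := by
        rw [iteratedDeriv_eq_iterate]; exact hFan.iterated_deriv j
      have hd : DifferentiableAt ℂ (iteratedDeriv j F) ↑x := (hA _ hx).differentiableAt
      have h1 : iteratedDeriv j fhat = fun y : ℝ => iteratedDeriv j F ↑y := funext ih
      rw [h1]
      exact (hd.hasDerivAt.comp_ofReal).deriv
  -- final bound
  set J : ℝ := ∫ t : ℝ, Real.exp (-(c / 2 * |t|)) with hJdef
  have hJ0 : 0 ≤ J := integral_nonneg fun t => (Real.exp_pos _).le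
  set K : ℝ := C₀ * J * Real.exp (b * (c / 4)) with hKdef
  have hK0 : 0 ≤ K := by positivity
  refine ⟨K + 1, by positivity, 4 / c, by positivity, fun x => ?_⟩
  have hball : ∀ ζ ∈ Metric.closedBall (↑x : ℂ) (c / 4), ‖F ζ‖ ≤ K * Real.exp (-n * |x|) := by
    intro ζ hζ
    have hζim : |ζ.im| ≤ c / 4 := by
      have h2 : |(ζ - ↑x).im| ≤ ‖ζ - ↑x‖ := Complex.abs_im_le_norm _
      simp only [Complex.sub_im, Complex.ofReal_im, sub_zero] at h2
      calc |ζ.im| ≤ ‖ζ - ↑x‖ := h2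
        _ ≤ c / 4 := by rwa [← dist_eq_norm, ← Metric.mem_closedBall]
    have hζim2 : |ζ.im| ≤ c / 2 := by linarith
    set β : ℝ := if 0 ≤ ζ.re then -b else b with hβdef
    have hβabs : |β| ≤ b := by
      rw [hβdef]; split_ifs <;> simp [abs_of_pos hb0, abs_of_neg (neg_neg_of_pos hb0)]
    have hFζ : F ζ = ∫ t : ℝ, f (↑t + ↑β * I) * Complex.exp (-I * (↑t + ↑β * I) * ζ) :=
      hshift β hβabs ζ hζim2
    have hbd : ‖F ζ‖ ≤ ∫ t : ℝ, C₀ * Real.exp (β * ζ.re) * Real.exp (-(c / 2 * |t|)) := by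
      rw [hFζ]
      refine norm_integral_le_of_norm_le ?_ (Filter.Eventually.of_forall fun t =>
        hnorm β hβabs ζ hζim2 t)
      simpa [mul_assoc] using (aux_integrable_exp_neg_abs hc2).const_mul (C₀ * Real.exp (β * ζ.re))
    have hval : (∫ t : ℝ, C₀ * Real.exp (β * ζ.re) * Real.exp (-(c / 2 * |t|)))
        = C₀ * Real.exp (β * ζ.re) * J := by
      rw [hJdef]
      exact integral_const_mul _ _
    have hβre : β * ζ.re = -(b * |ζ.re|) := by
      rw [hβdef]
      split_ifs with h
      · rw [_root_.abs_of_nonneg h]; ring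
      · rw [_root_.abs_of_neg (not_le.mp h)]; ring
    have hre2 : |x| - c / 4 ≤ |ζ.re| := by
      have h2 : |x - ζ.re| ≤ ‖(↑x : ℂ) - ζ‖ := by
        have := Complex.abs_re_le_norm ((↑x : ℂ) - ζ)
        simpa [Complex.sub_re] using this
      have h3 : ‖(↑x : ℂ) - ζ‖ ≤ c / 4 := by
        rw [← dist_eq_norm, dist_comm, ← Metric.mem_closedBall]
        exact hζ
      have h4 : |x| ≤ |ζ.re| + |x - ζ.re| := by
        calc |x| = |ζ.re + (x - ζ.re)| := by ring_nf
          _ ≤ |ζ.re| + |x - ζ.re| := abs_add_le _ _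
      linarith
    have hexp : Real.exp (β * ζ.re) ≤ Real.exp (b * (c / 4)) * Real.exp (-n * |x|) := by
      rw [← Real.exp_add, Real.exp_le_exp, hβre]
      have h5 : n * |x| ≤ b * |x| := mul_le_mul_of_nonneg_right hnb (abs_nonneg x)
      have h6 : b * (|x| - c / 4) ≤ b * |ζ.re| := mul_le_mul_of_nonneg_left hre2 hb0.le
      nlinarith
    calc ‖F ζ‖ ≤ C₀ * Real.exp (β * ζ.re) * J := by rw [← hval]; exact hbd
      _ ≤ C₀ * (Real.exp (b * (c / 4)) * Real.exp (-n * |x|)) * J :=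
          mul_le_mul_of_nonneg_right (mul_le_mul_of_nonneg_left hexp hC₀0) hJ0
      _ = K * Real.exp (-n * |x|) := by rw [hKdef]; ring
  have hsub : Metric.closedBall (↑x : ℂ) (c / 4) ⊆ {ζ : ℂ | |ζ.im| < c / 2} := by
    intro ζ hζ
    have h1 : |ζ.im| ≤ c / 4 := by
      have h2 : |(ζ - ↑x).im| ≤ ‖ζ - ↑x‖ := Complex.abs_im_le_norm _
      simp only [Complex.sub_im, Complex.ofReal_im, sub_zero] at h2
      calc |ζ.im| ≤ ‖ζ - ↑x‖ := h2
        _ ≤ c / 4 := by rwa [← dist_eq_norm, ← Metric.mem_closedBall]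
    simp only [Set.mem_setOf_eq]; linarith
  have hFdo2 : DifferentiableOn ℂ F (Metric.closedBall (↑x:ℂ) (c/4)) :=
    fun ζ hζ => (hFdiff ζ (hsub hζ)).differentiableWithinAt
  have hcb := aux_cauchy_bound (by positivity : (0:ℝ) < c / 4) hFdo2 hball k
  rw [hiter k x]
  have h4c : ((c:ℝ) / 4)⁻¹ = 4 / c := by
    rw [inv_div]
  calc ‖iteratedDeriv k F ↑x‖ ≤ k.factorial * (K * Real.exp (-n * |x|)) * (c / 4)⁻¹ ^ k := hcb
    _ = K * k.factorial * (4 / c) ^ k * Real.exp (-n * |x|) := by rw [h4c]; ring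
    _ ≤ (K + 1) * k.factorial * (4 / c) ^ k * Real.exp (-n * |x|) := by
        have : (0:ℝ) ≤ (k.factorial : ℝ) * (4 / c) ^ k * Real.exp (-n * |x|) := by positivity
        nlinarith [this]
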